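/- arXiv:nlin/0303032 — 2 statements merged into one kernel-verified Lean document; each statement's English description precedes it below -/
import Mathlib

section
/- In the lattice P (m=3, n=9), the composite w = s_{126} s_{346} s_{589} s_{346} s_{126} s_{67} of reflections (where s_{ij} is the reflection in e_i - e_j and s_{ijk} the reflection in e_0 - e_i - e_j - e_k) acts on P as the translation T_{α} with α = e_6 - e_7: w(L) = L + ⟨δ,L⟩ α - (⟨δ,L⟩ + ⟨L,α⟩) δ for all L ∈ P, where δ = 3e_0 - Σ_{i=1}^9 e_i. -/
def ee (i : ℕ) : ℕ → ℤ := fun j => if j = i then 1 else 0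

def B (x y : ℕ → ℤ) : ℤ := -(x 0 * y 0) + ∑ i ∈ Finset.Icc 1 9, x i * y i

/-- Reflection in a root `β` (with `⟨β,β⟩ = 2`): `s_β(L) = L - ⟨β,L⟩ β`. -/
def reflE (β L : ℕ → ℤ) : ℕ → ℤ := L - B β L • β

/-- The root `e_i - e_j`. -/
def r2 (i j : ℕ) : ℕ → ℤ := ee i - ee j

/-- The root `e_0 - e_i - e_j - e_k`. -/
def r3 (i j k : ℕ) : ℕ → ℤ := ee 0 - ee i - ee j - ee k

def δδ : ℕ → ℤ := 3 • ee 0 - ∑ i ∈ Finset.Icc 1 9, ee i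


lemma Bexp (x y : ℕ → ℤ) : B x y = -(x 0 * y 0) + (x 1 * y 1 + x 2 * y 2 + x 3 * y 3 + x 4 * y 4 + x 5 * y 5 + x 6 * y 6 + x 7 * y 7 + x 8 * y 8 + x 9 * y 9) := by
  have : Finset.Icc 1 9 = ({1,2,3,4,5,6,7,8,9} : Finset ℕ) := by decide
  simp [B, this, Finset.sum_insert]; ring

lemma Bsub (x y z : ℕ → ℤ) : B x (y - z) = B x y - B x z := by
  simp only [Bexp, Pi.sub_apply]; ring

lemma Bsmul (x : ℕ → ℤ) (c : ℤ) (y : ℕ → ℤ) : B x (c • y) = c * B x y := by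
  simp only [Bexp, Pi.smul_apply, smul_eq_mul]; ring

lemma δexp (j : ℕ) : δδ j = 3 * ee 0 j - (ee 1 j + ee 2 j + ee 3 j + ee 4 j + ee 5 j + ee 6 j + ee 7 j + ee 8 j + ee 9 j) := by
  have : Finset.Icc 1 9 = ({1,2,3,4,5,6,7,8,9} : Finset ℕ) := by decide
  show (3 • ee 0 - ∑ i ∈ Finset.Icc 1 9, ee i) j = _
  simp [this, Finset.sum_insert]; ring

set_option maxHeartbeats 4000000 in
/-- The composite `w = s₁₂₆ s₃₄₆ s₅₈₉ s₃₄₆ s₁₂₆ s₆₇` acts on `P` as the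
translation `T_α` with `α = e₆ - e₇`. -/
theorem stmt12 :
    ∀ L : ℕ → ℤ,
      reflE (r3 1 2 6) (reflE (r3 3 4 6) (reflE (r3 5 8 9)
        (reflE (r3 3 4 6) (reflE (r3 1 2 6) (reflE (r2 6 7) L))))) =
      L + B δδ L • r2 6 7 - (B δδ L + B L (r2 6 7)) • δδ := by
  intro L
  simp only [reflE, Bsub, Bsmul]
  funext x
  simp only [Pi.sub_apply, Pi.add_apply, Pi.smul_apply, smul_eq_mul, Bexp, δexp, r2, r3,
    Pi.sub_apply]
  rcases Nat.lt_or_ge x 10 with hx | hx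
  · interval_cases x <;> simp [ee] <;> ring
  · have h0 : (x = 0) = False := by simp; omega
    have h1 : (x = 1) = False := by simp; omega
    have h2 : (x = 2) = False := by simp; omega
    have h3 : (x = 3) = False := by simp; omega
    have h4 : (x = 4) = False := by simp; omega
    have h5 : (x = 5) = False := by simp; omega
    have h6 : (x = 6) = False := by simp; omega
    have h7 : (x = 7) = False := by simp; omega
    have h8 : (x = 8) = False := by simp; omega
    have h9 : (x = 9) = False := by simp; omega
    simp only [ee, h0,h1,h2,h3,h4,h5,h6,h7,h8,h9,if_false]
    norm_num
end

section
/- In the lattice P (m=3, n=9), let μ = s_{126} s_{346} s_{568} s_{15} s_{28} s_{79} s_{67} (composition of reflections). Then μ^2 equals the translation T_{α} with α = e_6 - e_7, i.e., μ(μ(L)) = L + ⟨δ,L⟩(e_6-e_7) - (⟨δ,L⟩ + ⟨L, e_6-e_7⟩) δ for all L ∈ P. -/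
/-- The map `μ = s₁₂₆ s₃₄₆ s₅₆₈ s₁₅ s₂₈ s₇₉ s₆₇`. -/
def μE (L : ℕ → ℤ) : ℕ → ℤ :=
  reflE (r3 1 2 6) (reflE (r3 3 4 6) (reflE (r3 5 6 8)
    (reflE (r2 1 5) (reflE (r2 2 8) (reflE (r2 7 9) (reflE (r2 6 7) L))))))

lemma icc9 : (Finset.Icc 1 9 : Finset ℕ) = {1,2,3,4,5,6,7,8,9} := rfl

lemma reflE_apply (β x : ℕ → ℤ) (j : ℕ) : reflE β x j = x j - B β x * β j := by
  simp [reflE]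

lemma B267 (x : ℕ → ℤ) : B (r2 6 7) x = x 6 - x 7 := by
  simp [B, icc9, r2, ee, Finset.sum_insert, Finset.mem_insert]; try ring
lemma B279 (x : ℕ → ℤ) : B (r2 7 9) x = x 7 - x 9 := by
  simp [B, icc9, r2, ee, Finset.sum_insert, Finset.mem_insert]; try ring
lemma B228 (x : ℕ → ℤ) : B (r2 2 8) x = x 2 - x 8 := by
  simp [B, icc9, r2, ee, Finset.sum_insert, Finset.mem_insert]; try ring
lemma B215 (x : ℕ → ℤ) : B (r2 1 5) x = x 1 - x 5 := by
  simp [B, icc9, r2, ee, Finset.sum_insert, Finset.mem_insert]; try ring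
lemma B3568 (x : ℕ → ℤ) : B (r3 5 6 8) x = -x 0 - x 5 - x 6 - x 8 := by
  simp [B, icc9, r3, ee, Finset.sum_insert, Finset.mem_insert]; try ring
lemma B3346 (x : ℕ → ℤ) : B (r3 3 4 6) x = -x 0 - x 3 - x 4 - x 6 := by
  simp [B, icc9, r3, ee, Finset.sum_insert, Finset.mem_insert]; try ring
lemma B3126 (x : ℕ → ℤ) : B (r3 1 2 6) x = -x 0 - x 1 - x 2 - x 6 := by
  simp [B, icc9, r3, ee, Finset.sum_insert, Finset.mem_insert]; try ring
lemma Bdel (x : ℕ → ℤ) :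
    B δδ x = -3 * x 0 - x 1 - x 2 - x 3 - x 4 - x 5 - x 6 - x 7 - x 8 - x 9 := by
  simp [B, icc9, δδ, ee, Finset.sum_insert, Finset.mem_insert]; try ring
lemma Bsnd (x : ℕ → ℤ) : B x (r2 6 7) = x 6 - x 7 := by
  simp [B, icc9, r2, ee, Finset.sum_insert, Finset.mem_insert]; try ring

/-- `μ² = T_α` with `α = e₆ - e₇`:
`μ(μ(L)) = L + ⟨δ,L⟩ (e₆-e₇) - (⟨δ,L⟩ + ⟨L, e₆-e₇⟩) δ` for all `L ∈ P`. -/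
theorem stmt13 :
    ∀ L : ℕ → ℤ,
      μE (μE L) = L + B δδ L • r2 6 7 - (B δδ L + B L (r2 6 7)) • δδ := by
  intro L
  simp only [μE]
  set L1 := reflE (r2 6 7) L with hL1
  have b1 : B (r2 6 7) L = (L 6 - L 7) := B267 L
  have e1 : ∀ j, L1 j = L j - (L 6 - L 7) * (r2 6 7) j := by
    intro j; rw [hL1, reflE_apply, b1]
  set L2 := reflE (r2 7 9) L1 with hL2
  have b2 : B (r2 7 9) L1 = (L 6 - L 9) := by
    rw [B279 L1]; simp only [e1]; simp [r2, r3, ee]; try ring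
  have e2 : ∀ j, L2 j = L j - (L 6 - L 7) * (r2 6 7) j - (L 6 - L 9) * (r2 7 9) j := by
    intro j; rw [hL2, reflE_apply, b2, e1 j]; try ring
  set L3 := reflE (r2 2 8) L2 with hL3
  have b3 : B (r2 2 8) L2 = (L 2 - L 8) := by
    rw [B228 L2]; simp only [e2]; simp [r2, r3, ee]; try ring
  have e3 : ∀ j, L3 j = L j - (L 6 - L 7) * (r2 6 7) j - (L 6 - L 9) * (r2 7 9) j - (L 2 - L 8) * (r2 2 8) j := by
    intro j; rw [hL3, reflE_apply, b3, e2 j]; try ring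
  set L4 := reflE (r2 1 5) L3 with hL4
  have b4 : B (r2 1 5) L3 = (L 1 - L 5) := by
    rw [B215 L3]; simp only [e3]; simp [r2, r3, ee]; try ring
  have e4 : ∀ j, L4 j = L j - (L 6 - L 7) * (r2 6 7) j - (L 6 - L 9) * (r2 7 9) j - (L 2 - L 8) * (r2 2 8) j - (L 1 - L 5) * (r2 1 5) j := by
    intro j; rw [hL4, reflE_apply, b4, e3 j]; try ring
  set L5 := reflE (r3 5 6 8) L4 with hL5
  have b5 : B (r3 5 6 8) L4 = (- L 0 - L 1 - L 2 - L 7) := by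
    rw [B3568 L4]; simp only [e4]; simp [r2, r3, ee]; try ring
  have e5 : ∀ j, L5 j = L j - (L 6 - L 7) * (r2 6 7) j - (L 6 - L 9) * (r2 7 9) j - (L 2 - L 8) * (r2 2 8) j - (L 1 - L 5) * (r2 1 5) j - (- L 0 - L 1 - L 2 - L 7) * (r3 5 6 8) j := by
    intro j; rw [hL5, reflE_apply, b5, e4 j]; try ring
  set L6 := reflE (r3 3 4 6) L5 with hL6
  have b6 : B (r3 3 4 6) L5 = (- L 0 - L 3 - L 4 - L 7) := by
    rw [B3346 L5]; simp only [e5]; simp [r2, r3, ee]; try ring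
  have e6 : ∀ j, L6 j = L j - (L 6 - L 7) * (r2 6 7) j - (L 6 - L 9) * (r2 7 9) j - (L 2 - L 8) * (r2 2 8) j - (L 1 - L 5) * (r2 1 5) j - (- L 0 - L 1 - L 2 - L 7) * (r3 5 6 8) j - (- L 0 - L 3 - L 4 - L 7) * (r3 3 4 6) j := by
    intro j; rw [hL6, reflE_apply, b6, e5 j]; try ring
  set L7 := reflE (r3 1 2 6) L6 with hL7
  have b7 : B (r3 1 2 6) L6 = (- L 0 - L 5 - L 7 - L 8) := by
    rw [B3126 L6]; simp only [e6]; simp [r2, r3, ee]; try ring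
  have e7 : ∀ j, L7 j = L j - (L 6 - L 7) * (r2 6 7) j - (L 6 - L 9) * (r2 7 9) j - (L 2 - L 8) * (r2 2 8) j - (L 1 - L 5) * (r2 1 5) j - (- L 0 - L 1 - L 2 - L 7) * (r3 5 6 8) j - (- L 0 - L 3 - L 4 - L 7) * (r3 3 4 6) j - (- L 0 - L 5 - L 7 - L 8) * (r3 1 2 6) j := by
    intro j; rw [hL7, reflE_apply, b7, e6 j]; try ring
  set L8 := reflE (r2 6 7) L7 with hL8
  have b8 : B (r2 6 7) L7 = (- 3 * L 0 - L 1 - L 2 - L 3 - L 4 - L 5 - 2 * L 7 - L 8 - L 9) := by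
    rw [B267 L7]; simp only [e7]; simp [r2, r3, ee]; try ring
  have e8 : ∀ j, L8 j = L j - (L 6 - L 7) * (r2 6 7) j - (L 6 - L 9) * (r2 7 9) j - (L 2 - L 8) * (r2 2 8) j - (L 1 - L 5) * (r2 1 5) j - (- L 0 - L 1 - L 2 - L 7) * (r3 5 6 8) j - (- L 0 - L 3 - L 4 - L 7) * (r3 3 4 6) j - (- L 0 - L 5 - L 7 - L 8) * (r3 1 2 6) j - (- 3 * L 0 - L 1 - L 2 - L 3 - L 4 - L 5 - 2 * L 7 - L 8 - L 9) * (r2 6 7) j := by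
    intro j; rw [hL8, reflE_apply, b8, e7 j]; try ring
  set L9 := reflE (r2 7 9) L8 with hL9
  have b9 : B (r2 7 9) L8 = (- 3 * L 0 - L 1 - L 2 - L 3 - L 4 - L 5 - L 6 - 2 * L 7 - L 8) := by
    rw [B279 L8]; simp only [e8]; simp [r2, r3, ee]; try ring
  have e9 : ∀ j, L9 j = L j - (L 6 - L 7) * (r2 6 7) j - (L 6 - L 9) * (r2 7 9) j - (L 2 - L 8) * (r2 2 8) j - (L 1 - L 5) * (r2 1 5) j - (- L 0 - L 1 - L 2 - L 7) * (r3 5 6 8) j - (- L 0 - L 3 - L 4 - L 7) * (r3 3 4 6) j - (- L 0 - L 5 - L 7 - L 8) * (r3 1 2 6) j - (- 3 * L 0 - L 1 - L 2 - L 3 - L 4 - L 5 - 2 * L 7 - L 8 - L 9) * (r2 6 7) j - (- 3 * L 0 - L 1 - L 2 - L 3 - L 4 - L 5 - L 6 - 2 * L 7 - L 8) * (r2 7 9) j := by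
    intro j; rw [hL9, reflE_apply, b9, e8 j]; try ring
  set L10 := reflE (r2 2 8) L9 with hL10
  have b10 : B (r2 2 8) L9 = (L 1 - L 5) := by
    rw [B228 L9]; simp only [e9]; simp [r2, r3, ee]; try ring
  have e10 : ∀ j, L10 j = L j - (L 6 - L 7) * (r2 6 7) j - (L 6 - L 9) * (r2 7 9) j - (L 2 - L 8) * (r2 2 8) j - (L 1 - L 5) * (r2 1 5) j - (- L 0 - L 1 - L 2 - L 7) * (r3 5 6 8) j - (- L 0 - L 3 - L 4 - L 7) * (r3 3 4 6) j - (- L 0 - L 5 - L 7 - L 8) * (r3 1 2 6) j - (- 3 * L 0 - L 1 - L 2 - L 3 - L 4 - L 5 - 2 * L 7 - L 8 - L 9) * (r2 6 7) j - (- 3 * L 0 - L 1 - L 2 - L 3 - L 4 - L 5 - L 6 - 2 * L 7 - L 8) * (r2 7 9) j - (L 1 - L 5) * (r2 2 8) j := by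
    intro j; rw [hL10, reflE_apply, b10, e9 j]; try ring
  set L11 := reflE (r2 1 5) L10 with hL11
  have b11 : B (r2 1 5) L10 = (L 2 - L 8) := by
    rw [B215 L10]; simp only [e10]; simp [r2, r3, ee]; try ring
  have e11 : ∀ j, L11 j = L j - (L 6 - L 7) * (r2 6 7) j - (L 6 - L 9) * (r2 7 9) j - (L 2 - L 8) * (r2 2 8) j - (L 1 - L 5) * (r2 1 5) j - (- L 0 - L 1 - L 2 - L 7) * (r3 5 6 8) j - (- L 0 - L 3 - L 4 - L 7) * (r3 3 4 6) j - (- L 0 - L 5 - L 7 - L 8) * (r3 1 2 6) j - (- 3 * L 0 - L 1 - L 2 - L 3 - L 4 - L 5 - 2 * L 7 - L 8 - L 9) * (r2 6 7) j - (- 3 * L 0 - L 1 - L 2 - L 3 - L 4 - L 5 - L 6 - 2 * L 7 - L 8) * (r2 7 9) j - (L 1 - L 5) * (r2 2 8) j - (L 2 - L 8) * (r2 1 5) j := by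
    intro j; rw [hL11, reflE_apply, b11, e10 j]; try ring
  set L12 := reflE (r3 5 6 8) L11 with hL12
  have b12 : B (r3 5 6 8) L11 = (- 2 * L 0 - L 1 - L 2 - L 3 - L 4 - L 7 - L 9) := by
    rw [B3568 L11]; simp only [e11]; simp [r2, r3, ee]; try ring
  have e12 : ∀ j, L12 j = L j - (L 6 - L 7) * (r2 6 7) j - (L 6 - L 9) * (r2 7 9) j - (L 2 - L 8) * (r2 2 8) j - (L 1 - L 5) * (r2 1 5) j - (- L 0 - L 1 - L 2 - L 7) * (r3 5 6 8) j - (- L 0 - L 3 - L 4 - L 7) * (r3 3 4 6) j - (- L 0 - L 5 - L 7 - L 8) * (r3 1 2 6) j - (- 3 * L 0 - L 1 - L 2 - L 3 - L 4 - L 5 - 2 * L 7 - L 8 - L 9) * (r2 6 7) j - (- 3 * L 0 - L 1 - L 2 - L 3 - L 4 - L 5 - L 6 - 2 * L 7 - L 8) * (r2 7 9) j - (L 1 - L 5) * (r2 2 8) j - (L 2 - L 8) * (r2 1 5) j - (- 2 * L 0 - L 1 - L 2 - L 3 - L 4 - L 7 - L 9) * (r3 5 6 8) j := by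
    intro j; rw [hL12, reflE_apply, b12, e11 j]; try ring
  set L13 := reflE (r3 3 4 6) L12 with hL13
  have b13 : B (r3 3 4 6) L12 = (- 2 * L 0 - L 1 - L 2 - L 5 - L 7 - L 8 - L 9) := by
    rw [B3346 L12]; simp only [e12]; simp [r2, r3, ee]; try ring
  have e13 : ∀ j, L13 j = L j - (L 6 - L 7) * (r2 6 7) j - (L 6 - L 9) * (r2 7 9) j - (L 2 - L 8) * (r2 2 8) j - (L 1 - L 5) * (r2 1 5) j - (- L 0 - L 1 - L 2 - L 7) * (r3 5 6 8) j - (- L 0 - L 3 - L 4 - L 7) * (r3 3 4 6) j - (- L 0 - L 5 - L 7 - L 8) * (r3 1 2 6) j - (- 3 * L 0 - L 1 - L 2 - L 3 - L 4 - L 5 - 2 * L 7 - L 8 - L 9) * (r2 6 7) j - (- 3 * L 0 - L 1 - L 2 - L 3 - L 4 - L 5 - L 6 - 2 * L 7 - L 8) * (r2 7 9) j - (L 1 - L 5) * (r2 2 8) j - (L 2 - L 8) * (r2 1 5) j - (- 2 * L 0 - L 1 - L 2 - L 3 - L 4 - L 7 - L 9) * (r3 5 6 8) j - (- 2 * L 0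 - L 1 - L 2 - L 5 - L 7 - L 8 - L 9) * (r3 3 4 6) j := by
    intro j; rw [hL13, reflE_apply, b13, e12 j]; try ring
  set L14 := reflE (r3 1 2 6) L13 with hL14
  have b14 : B (r3 1 2 6) L13 = (- 2 * L 0 - L 3 - L 4 - L 5 - L 7 - L 8 - L 9) := by
    rw [B3126 L13]; simp only [e13]; simp [r2, r3, ee]; try ring
  have e14 : ∀ j, L14 j = L j - (L 6 - L 7) * (r2 6 7) j - (L 6 - L 9) * (r2 7 9) j - (L 2 - L 8) * (r2 2 8) j - (L 1 - L 5) * (r2 1 5) j - (- L 0 - L 1 - L 2 - L 7) * (r3 5 6 8) j - (- L 0 - L 3 - L 4 - L 7) * (r3 3 4 6) j - (- L 0 - L 5 - L 7 - L 8) * (r3 1 2 6) j - (- 3 * L 0 - L 1 - L 2 - L 3 - L 4 - L 5 - 2 * L 7 - L 8 - L 9) * (r2 6 7) j - (- 3 * L 0 - L 1 - L 2 - L 3 - L 4 - L 5 - L 6 - 2 * L 7 - L 8) * (r2 7 9) j - (L 1 - L 5) * (r2 2 8) j - (L 2 - L 8) * (r2 1 5) j - (- 2 * L 0 - L 1 -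 L 2 - L 3 - L 4 - L 7 - L 9) * (r3 5 6 8) j - (- 2 * L 0 - L 1 - L 2 - L 5 - L 7 - L 8 - L 9) * (r3 3 4 6) j - (- 2 * L 0 - L 3 - L 4 - L 5 - L 7 - L 8 - L 9) * (r3 1 2 6) j := by
    intro j; rw [hL14, reflE_apply, b14, e13 j]; try ring
  funext j
  rw [e14 j, Bdel L, Bsnd L]
  simp only [Pi.add_apply, Pi.sub_apply, Pi.smul_apply, smul_eq_mul]
  rcases Nat.lt_or_ge j 10 with h | h
  · interval_cases j <;>
      simp [r2, r3, ee, δδ, icc9, Finset.sum_apply, Finset.sum_insert,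
        Finset.mem_insert] <;> try ring
  · have h0 : j ≠ 0 := by omega
    have h1 : j ≠ 1 := by omega
    have h2 : j ≠ 2 := by omega
    have h3 : j ≠ 3 := by omega
    have h4 : j ≠ 4 := by omega
    have h5 : j ≠ 5 := by omega
    have h6 : j ≠ 6 := by omega
    have h7 : j ≠ 7 := by omega
    have h8 : j ≠ 8 := by omega
    have h9 : j ≠ 9 := by omega
    simp [r2, r3, ee, δδ, icc9, Finset.sum_apply, Finset.sum_insert,
      Finset.mem_insert, h0, h1, h2, h3, h4, h5, h6, h7, h8, h9]
end
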